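/- Let F, G, H be Grothendieck fibrations over E and u : F ⥤ H, v : G ⥤ H cartesian E-functors with u an isofibration. Then the pullback category F ×_H G (computed in categories over E) is a Grothendieck fibration over E, and the fibre of F ×_H G over any object S of E is the pullback F_S ×_{H_S} G_S of the fibre categories. -/

import Mathlib

open CategoryTheory CategoryTheory.Limits CategoryTheory.Functor

universe w₁ w₂ w₃ w₄ v₁ v₂ v₃ v₄

namespace PaperStacks

/-- A functor `p : A ⥤ B` is an isofibration if every isomorphism `f : p.obj a ≅ b` in `B`
lifts to an isomorphism `e : a ≅ a'` in `A` with `p.obj a' = b` and `p.map e.hom = f.hom`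
(up to the identification `p.obj a' = b`). -/
def IsIsofibration {A : Type w₁} {B : Type w₂} [Category.{v₁} A] [Category.{v₂} B]
    (p : A ⥤ B) : Prop :=
  ∀ (a : A) (b : B) (f : p.obj a ≅ b), ∃ (a' : A) (e : a ≅ a') (h : p.obj a' = b),
    p.map e.hom = f.hom ≫ eqToHom h.symm

/-- A surjective equivalence: an equivalence of categories that is surjective on objects. -/
def IsSurjectiveEquivalence {A : Type w₁} {B : Type w₂} [Category.{v₁} A] [Category.{v₂} B]
    (p : A ⥤ B) : Prop :=
  p.IsEquivalence ∧ Function.Surjective p.obj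

/-- The functor induced on fibre categories by a functor `u : F ⥤ G` over `E`. -/
def fiberMap {E : Type w₁} {F : Type w₂} {G : Type w₃}
    [Category.{v₁} E] [Category.{v₂} F] [Category.{v₃} G]
    {p : F ⥤ E} {q : G ⥤ E} (u : F ⥤ G) (h : u ⋙ q = p) (S : E) :
    Functor.Fiber p S ⥤ Functor.Fiber q S :=
  Functor.Fiber.inducedFunctor (F := Functor.Fiber.fiberInclusion ⋙ u)
    (by rw [Functor.assoc, h]; exact Functor.Fiber.fiberInclusion_comp_eq_const)

section CatPullback

variable {F : Type w₁} {G : Type w₂} {H : Type w₃}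
  [Category.{v₁} F] [Category.{v₂} G] [Category.{v₃} H]

/-- The strict pullback of categories along `u : F ⥤ H` and `v : G ⥤ H`: objects are
pairs `(x, y)` with `u.obj x = v.obj y`. -/
structure CatPullback (u : F ⥤ H) (v : G ⥤ H) where
  left : F
  right : G
  w : u.obj left = v.obj right

variable {u : F ⥤ H} {v : G ⥤ H}

instance : Category (CatPullback u v) where
  Hom a b := { fg : (a.left ⟶ b.left) × (a.right ⟶ b.right) //
      u.map fg.1 ≫ eqToHom b.w = eqToHom a.w ≫ v.map fg.2 }
  id a := ⟨(𝟙 a.left, 𝟙 a.right), by simp⟩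
  comp f g := ⟨(f.1.1 ≫ g.1.1, f.1.2 ≫ g.1.2), by
    rw [Functor.map_comp, Functor.map_comp, Category.assoc, g.2,
      ← Category.assoc, f.2, Category.assoc]⟩
  id_comp f := by apply Subtype.ext; simp
  comp_id f := by apply Subtype.ext; simp
  assoc f g h := by apply Subtype.ext; simp

/-- The first projection of the strict pullback of categories. -/
def CatPullback.fst (u : F ⥤ H) (v : G ⥤ H) : CatPullback u v ⥤ F where
  obj a := a.left
  map f := f.1.1

end CatPullback


section Helpers

open Functor IsHomLift

variable {E : Type w₁} {F : Type w₂} {G : Type w₃} {H : Type w₄}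
  [Category.{v₁} E] [Category.{v₂} F] [Category.{v₃} G] [Category.{v₄} H]

lemma isHomLift_comp_iff (u : F ⥤ H) (r : H ⥤ E) {R S : E} {a b : F} (f : R ⟶ S) (φ : a ⟶ b) :
    (u ⋙ r).IsHomLift f φ ↔ r.IsHomLift f (u.map φ) := by
  constructor
  · intro h
    obtain ⟨⟩ := h
    exact Functor.IsHomLift.map (p := r) (u.map φ)
  · intro h
    obtain ⟨⟩ := h
    exact Functor.IsHomLift.map (p := u ⋙ r) φ

lemma CatPullback.hom_ext' {u : F ⥤ H} {v : G ⥤ H} {a b : CatPullback u v} {f g : a ⟶ b}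
    (h1 : f.1.1 = g.1.1) (h2 : f.1.2 = g.1.2) : f = g :=
  Subtype.ext (Prod.ext h1 h2)

lemma CatPullback.obj_ext {u : F ⥤ H} {v : G ⥤ H} {a b : CatPullback u v}
    (h1 : a.left = b.left) (h2 : a.right = b.right) : a = b := by
  cases a; cases b; cases h1; cases h2; rfl

lemma fiber_eqToHom_val {p : F ⥤ E} {S : E} {a b : Functor.Fiber p S} (h : a = b) :
    (eqToHom h).1 = eqToHom (congrArg Subtype.val h) := by
  subst h; rfl

lemma fiber_comp_val {p : F ⥤ E} {S : E} {a b c : Functor.Fiber p S} (f : a ⟶ b) (g : b ⟶ c) :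
    (f ≫ g).1 = f.1 ≫ g.1 := rfl

lemma right_isHomLift (r : H ⥤ E) {u : F ⥤ H} {v : G ⥤ H} {R S : E} (f : R ⟶ S)
    {a b : CatPullback u v} (φ : a ⟶ b) [h : (u ⋙ r).IsHomLift f φ.1.1] :
    (v ⋙ r).IsHomLift f φ.1.2 := by
  have ha : (v ⋙ r).obj a.right = R := by
    rw [Functor.comp_obj, ← a.w]
    exact domain_eq (u ⋙ r) f φ.1.1
  have hb : (v ⋙ r).obj b.right = S := by
    rw [Functor.comp_obj, ← b.w]
    exact codomain_eq (u ⋙ r) f φ.1.1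
  apply of_commsq _ _ _ ha hb
  have key := congrArg r.map φ.2
  rw [r.map_comp, r.map_comp, eqToHom_map, eqToHom_map] at key
  have hfac : r.map (u.map φ.1.1) = eqToHom (domain_eq (u ⋙ r) f φ.1.1) ≫ f ≫
      eqToHom (codomain_eq (u ⋙ r) f φ.1.1).symm := fac' (u ⋙ r) f φ.1.1
  rw [hfac] at key
  have key3 := congrArg (fun t => eqToHom (congrArg r.obj a.w).symm ≫ t) key
  simp only [Category.assoc, eqToHom_trans_assoc, eqToHom_refl, Category.id_comp] at key3
  show r.map (v.map φ.1.2) ≫ eqToHom hb = eqToHom ha ≫ f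
  rw [← key3]
  simp [eqToHom_trans]

/-- The comparison functor from the fibre of the pullback to the pullback of the fibres. -/
def fiberPB (r : H ⥤ E) (u : F ⥤ H) (v : G ⥤ H) (S : E) :
    Functor.Fiber (CatPullback.fst u v ⋙ (u ⋙ r)) S ⥤
      CatPullback (fiberMap u (rfl : u ⋙ r = u ⋙ r) S)
        (fiberMap v (rfl : v ⋙ r = v ⋙ r) S) where
  obj a :=
    { left := ⟨a.1.left, a.2⟩
      right := ⟨a.1.right, by rw [Functor.comp_obj, ← a.1.w]; exact a.2⟩
      w := Subtype.ext a.1.w }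
  map {a b} τ :=
    have h1 : (u ⋙ r).IsHomLift (𝟙 S) τ.1.1.1 :=
      (isHomLift_comp_iff (CatPullback.fst u v) (u ⋙ r) _ τ.1).1 τ.2
    ⟨(⟨τ.1.1.1, h1⟩,
      ⟨τ.1.1.2, by
        haveI := h1
        exact right_isHomLift r (𝟙 S) τ.1⟩), by
      refine Subtype.ext ?_
      rw [fiber_comp_val, fiber_comp_val, fiber_eqToHom_val, fiber_eqToHom_val]
      exact τ.1.2⟩
  map_id a := rfl
  map_comp f g := rfl

end Helpers
/-- The strict pullback of Grothendieck fibrations over `E` along a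
cartesian isofibration is a Grothendieck fibration over `E`, whose fibre over any
`S : E` is (isomorphic to) the strict pullback of the fibre categories. -/
theorem catPullback_isFibered_and_fiber
    {E : Type w₁} {F : Type w₂} {G : Type w₃} {H : Type w₄}
    [Category.{v₁} E] [Category.{v₂} F] [Category.{v₃} G] [Category.{v₄} H]
    {p : F ⥤ E} {q : G ⥤ E} {r : H ⥤ E}
    (u : F ⥤ H) (v : G ⥤ H) (husq : u ⋙ r = p) (hvsq : v ⋙ r = q)
    (hp : p.IsFibered) (hq : q.IsFibered) (hr : r.IsFibered)
    (hucart : ∀ ⦃a b : F⦄ (φ : a ⟶ b) ⦃R S : E⦄ (f : R ⟶ S),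
      p.IsStronglyCartesian f φ → r.IsStronglyCartesian f (u.map φ))
    (hvcart : ∀ ⦃a b : G⦄ (φ : a ⟶ b) ⦃R S : E⦄ (f : R ⟶ S),
      q.IsStronglyCartesian f φ → r.IsStronglyCartesian f (v.map φ))
    (huiso : IsIsofibration u) :
    (CatPullback.fst u v ⋙ p).IsFibered ∧
      ∀ S : E, ∃ Φ : Functor.Fiber (CatPullback.fst u v ⋙ p) S ⥤
          CatPullback (fiberMap u husq S) (fiberMap v hvsq S),
        Φ.IsEquivalence ∧ Function.Bijective Φ.obj := by
  subst husq hvsq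
  haveI := hp; haveI := hq; haveI := hr
  have key : ∀ (a : CatPullback u v) (R : E) (f : R ⟶ (u ⋙ r).obj a.left),
      ∃ (b : CatPullback u v) (Φ : b ⟶ a),
        (CatPullback.fst u v ⋙ (u ⋙ r)).IsStronglyCartesian f Φ := by
    intro a R f
    obtain ⟨x', φ, hφ⟩ :=
      Functor.IsPreFibered.exists_isCartesian' (p := u ⋙ r) (a := a.left) (R := R) f
    haveI := hφ
    have hφs : (u ⋙ r).IsStronglyCartesian f φ := inferInstance
    have hqa : (v ⋙ r).obj a.right = (u ⋙ r).obj a.left := by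
      simp only [Functor.comp_obj]; rw [← a.w]
    obtain ⟨y', ψ, hψ⟩ := IsPreFibered.exists_isCartesian (v ⋙ r) hqa f
    haveI := hψ
    have hψs : (v ⋙ r).IsStronglyCartesian f ψ := inferInstance
    haveI hφr := hucart φ f hφs
    haveI hψr := hvcart ψ f hψs
    haveI : r.IsHomLift (𝟙 ((u ⋙ r).obj a.left)) (eqToIso a.w.symm).hom :=
      IsHomLift.eqToHom_codomain_lift_id a.w.symm rfl
    haveI hχc : r.IsCartesian f (v.map ψ ≫ (eqToIso a.w.symm).hom) := inferInstance
    haveI hχ : r.IsStronglyCartesian f (v.map ψ ≫ (eqToIso a.w.symm).hom) := inferInstance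
    set χ : v.obj y' ⟶ u.obj a.left := v.map ψ ≫ (eqToIso a.w.symm).hom with hχdef
    let e : u.obj x' ≅ v.obj y' := (Functor.IsCartesian.domainUniqueUpToIso r f (u.map φ) χ).symm
    have he1 : e.inv ≫ u.map φ = χ := Functor.IsCartesian.fac r f (u.map φ) χ
    have he2 : e.hom ≫ χ = u.map φ := Functor.IsCartesian.fac r f χ (u.map φ)
    haveI heh : r.IsHomLift (𝟙 R) e.hom :=
      Functor.IsCartesian.domainUniqueUpToIso_hom_isHomLift r f (u.map φ) χ
    haveI hei : r.IsHomLift (𝟙 R) e.inv :=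
      Functor.IsCartesian.domainUniqueUpToIso_inv_isHomLift r f (u.map φ) χ
    obtain ⟨x'', ex, h, hu⟩ := huiso x' (v.obj y') e
    have hui : u.map ex.inv = eqToHom h ≫ e.inv := by
      have h2 : u.map ex.hom ≫ u.map ex.inv = 𝟙 _ := by
        rw [← u.map_comp, Iso.hom_inv_id, u.map_id]
      have h1 : u.map ex.hom ≫ (eqToHom h ≫ e.inv) = 𝟙 _ := by
        rw [hu]; simp
      exact (IsIso.eq_inv_of_hom_inv_id h2).trans (IsIso.eq_inv_of_hom_inv_id h1).symm
    have cond : u.map (ex.inv ≫ φ) ≫ eqToHom a.w = eqToHom h ≫ v.map ψ := by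
      rw [u.map_comp, hui]
      simp only [Category.assoc]
      congr 1
      rw [← Category.assoc, he1, hχdef]
      simp
    haveI hexh : (u ⋙ r).IsHomLift (𝟙 R) ex.hom := by
      rw [isHomLift_comp_iff, hu]; infer_instance
    haveI hexi : (u ⋙ r).IsHomLift (𝟙 R) ex.inv := by
      rw [isHomLift_comp_iff, hui]; infer_instance
    haveI hΦl : (u ⋙ r).IsHomLift f (ex.inv ≫ φ) := inferInstance
    refine ⟨⟨x'', y', h⟩, ⟨(ex.inv ≫ φ, ψ), cond⟩, ?_⟩
    refine { toIsHomLift := ?_, universal_property' := ?_ }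
    · rw [isHomLift_comp_iff (CatPullback.fst u v) (u ⋙ r)]
      exact hΦl
    · intro c g τ hτ
      haveI hτ1 : (u ⋙ r).IsHomLift (g ≫ f) τ.1.1 :=
        (isHomLift_comp_iff (CatPullback.fst u v) (u ⋙ r) _ τ).1 hτ
      haveI hτ2 : (v ⋙ r).IsHomLift (g ≫ f) τ.1.2 := right_isHomLift r (g ≫ f) τ
      let χ₁ : c.left ⟶ x' :=
        Functor.IsStronglyCartesian.map (u ⋙ r) f φ (f' := g ≫ f) rfl τ.1.1
      let χ₂ : c.right ⟶ y' :=
        Functor.IsStronglyCartesian.map (v ⋙ r) f ψ (f' := g ≫ f) rfl τ.1.2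
      haveI hχ₁l : (u ⋙ r).IsHomLift g χ₁ :=
        Functor.IsStronglyCartesian.map_isHomLift (u ⋙ r) f φ rfl τ.1.1
      haveI hχ₂l : (v ⋙ r).IsHomLift g χ₂ :=
        Functor.IsStronglyCartesian.map_isHomLift (v ⋙ r) f ψ rfl τ.1.2
      have hfac1 : χ₁ ≫ φ = τ.1.1 := Functor.IsStronglyCartesian.fac (u ⋙ r) f φ rfl τ.1.1
      have hfac2 : χ₂ ≫ ψ = τ.1.2 := Functor.IsStronglyCartesian.fac (v ⋙ r) f ψ rfl τ.1.2
      haveI : r.IsHomLift g (u.map χ₁) := (isHomLift_comp_iff u r g χ₁).1 hχ₁l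
      haveI : r.IsHomLift g (v.map χ₂) := (isHomLift_comp_iff v r g χ₂).1 hχ₂l
      have τcomm : u.map τ.1.1 ≫ eqToHom a.w = eqToHom c.w ≫ v.map τ.1.2 := τ.2
      have hcompat' : u.map χ₁ ≫ e.hom = eqToHom c.w ≫ v.map χ₂ := by
        haveI : r.IsHomLift g (u.map χ₁ ≫ e.hom) := inferInstance
        haveI : r.IsHomLift g (eqToHom c.w ≫ v.map χ₂) := inferInstance
        apply Functor.IsStronglyCartesian.ext r f (v.map ψ) g
        have hev : e.hom ≫ v.map ψ = u.map φ ≫ eqToHom a.w := by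
          rw [← he2, hχdef]; simp
        calc (u.map χ₁ ≫ e.hom) ≫ v.map ψ = u.map χ₁ ≫ e.hom ≫ v.map ψ := by
              rw [Category.assoc]
          _ = u.map χ₁ ≫ u.map φ ≫ eqToHom a.w := by rw [hev]
          _ = u.map (χ₁ ≫ φ) ≫ eqToHom a.w := by rw [u.map_comp, Category.assoc]
          _ = u.map τ.1.1 ≫ eqToHom a.w := by rw [hfac1]
          _ = eqToHom c.w ≫ v.map τ.1.2 := τcomm
          _ = eqToHom c.w ≫ v.map (χ₂ ≫ ψ) := by rw [hfac2]
          _ = (eqToHom c.w ≫ v.map χ₂) ≫ v.map ψ := by rw [v.map_comp, Category.assoc]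
      have hcompat : u.map (χ₁ ≫ ex.hom) ≫ eqToHom h = eqToHom c.w ≫ v.map χ₂ := by
        rw [u.map_comp, hu]
        simp only [Category.assoc, eqToHom_trans, eqToHom_refl, Category.comp_id]
        exact hcompat'
      refine ⟨⟨(χ₁ ≫ ex.hom, χ₂), hcompat⟩, ⟨?_, ?_⟩, ?_⟩
      · rw [isHomLift_comp_iff (CatPullback.fst u v) (u ⋙ r)]
        show (u ⋙ r).IsHomLift g (χ₁ ≫ ex.hom)
        infer_instance
      · apply CatPullback.hom_ext'
        · show (χ₁ ≫ ex.hom) ≫ ex.inv ≫ φ = τ.1.1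
          rw [Category.assoc, Iso.hom_inv_id_assoc]
          exact hfac1
        · exact hfac2
      · rintro π ⟨hπl, hπc⟩
        have hπ1 : π.1.1 ≫ ex.inv ≫ φ = τ.1.1 := congrArg (fun z => z.1.1) hπc
        have hπ2 : π.1.2 ≫ ψ = τ.1.2 := congrArg (fun z => z.1.2) hπc
        haveI hπl1 : (u ⋙ r).IsHomLift g π.1.1 :=
          (isHomLift_comp_iff (CatPullback.fst u v) (u ⋙ r) _ π).1 hπl
        haveI hπl2 : (v ⋙ r).IsHomLift g π.1.2 := right_isHomLift r g π
        have e2 : π.1.2 = χ₂ :=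
          Functor.IsStronglyCartesian.map_uniq (v ⋙ r) f ψ rfl τ.1.2 π.1.2 hπ2
        haveI : (u ⋙ r).IsHomLift g (π.1.1 ≫ ex.inv) := inferInstance
        have e1 : π.1.1 ≫ ex.inv = χ₁ :=
          Functor.IsStronglyCartesian.map_uniq (u ⋙ r) f φ rfl τ.1.1 _
            (by rw [Category.assoc]; exact hπ1)
        apply CatPullback.hom_ext'
        · show π.1.1 = χ₁ ≫ ex.hom
          rw [← e1, Category.assoc, Iso.inv_hom_id, Category.comp_id]
        · exact e2
  constructor
  · exact Functor.IsFibered.of_exists_isStronglyCartesian (fun a R f => key a R f)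
  · intro S
    have hsurj : Function.Surjective (fiberPB r u v S).obj := by
      intro c
      refine ⟨⟨⟨c.left.1, c.right.1, congrArg Subtype.val c.w⟩, c.left.2⟩, ?_⟩
      apply CatPullback.obj_ext <;> exact Subtype.ext rfl
    have hinj : Function.Injective (fiberPB r u v S).obj := by
      intro a b hab
      apply Subtype.ext
      apply CatPullback.obj_ext
      · exact congrArg (fun z => (CatPullback.left z).1) hab
      · exact congrArg (fun z => (CatPullback.right z).1) hab
    refine ⟨fiberPB r u v S, ⟨?_, ?_, ?_⟩, hinj, hsurj⟩
    · constructor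
      intro a b τ σ hts
      apply Subtype.ext
      apply CatPullback.hom_ext'
      · exact congrArg (fun z => z.1.1.1) hts
      · exact congrArg (fun z => z.1.2.1) hts
    · constructor
      intro a b g
      refine ⟨⟨⟨(g.1.1.1, g.1.2.1), ?_⟩, ?_⟩, ?_⟩
      · have hval := congrArg Subtype.val g.2
        rw [fiber_comp_val, fiber_comp_val, fiber_eqToHom_val, fiber_eqToHom_val] at hval
        exact hval
      · rw [isHomLift_comp_iff (CatPullback.fst u v) (u ⋙ r)]
        exact g.1.1.2
      · rfl
    · exact ⟨fun Y => ⟨(hsurj Y).choose, ⟨eqToIso (hsurj Y).choose_spec⟩⟩⟩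

end PaperStacks
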